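/- For every integer D ≥ 1, the coefficient of t⁵ in the formal power series P_B(t)·Q_B(t) ∈ ℚ[[t]] equals (1/20)·D·(D²−1)·(D²−4), where P_B(t) = (1−t)^{−D}·(1−t²)^{−D(D−1)/2} and Q_B(t) = 1 − D t + (1/3)D(D²−1) t³ − (1/12)D²(D²−1) t⁴. In particular, for every D ≥ 3 one has P_B(t)·Q_B(t) ≠ 1. -/

import Mathlib

open PowerSeries

/-- The Poincaré series of the parafermionic algebra with `D` degrees of freedom,
`P_B(t) = (1-t)^{-D} (1-t²)^{-D(D-1)/2}`, as a formal power series over `ℚ`. -/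
noncomputable def parafermionicPoincareSeries (D : ℕ) : PowerSeries ℚ :=
  ((1 - PowerSeries.X : PowerSeries ℚ)⁻¹) ^ D *
    ((1 - PowerSeries.X ^ 2 : PowerSeries ℚ)⁻¹) ^ (D * (D - 1) / 2)

/-- The series `Q_B(t) = 1 - D t + (1/3) D (D²-1) t³ - (1/12) D² (D²-1) t⁴` built from the
dimensions of the homogeneous components of the dual cubic algebra `B^!`. -/
noncomputable def parafermionicDualSeries (D : ℕ) : PowerSeries ℚ :=
  1 - PowerSeries.C (D : ℚ) * PowerSeries.X
    + PowerSeries.C ((D : ℚ) * ((D : ℚ) ^ 2 - 1) / 3) * PowerSeries.X ^ 3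
    - PowerSeries.C ((D : ℚ) ^ 2 * ((D : ℚ) ^ 2 - 1) / 12) * PowerSeries.X ^ 4

lemma one_sub_X_inv_eq : (1 - PowerSeries.X : PowerSeries ℚ)⁻¹ = PowerSeries.mk 1 := by
  rw [PowerSeries.inv_eq_iff_mul_eq_one (by simp)]
  exact PowerSeries.mk_one_mul_one_sub_eq_one ℚ

lemma one_sub_X_sq_inv_eq :
    (1 - PowerSeries.X ^ 2 : PowerSeries ℚ)⁻¹ =
      PowerSeries.mk (fun n => if Even n then 1 else 0) := by
  rw [PowerSeries.inv_eq_iff_mul_eq_one (by simp)]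
  ext n
  rw [mul_sub, mul_one, map_sub, PowerSeries.coeff_mul_X_pow']
  simp only [PowerSeries.coeff_mk, PowerSeries.coeff_one]
  rcases n with _ | _ | n
  · norm_num
  · norm_num
  · have h : Even (n + 1 + 1) ↔ Even n := by
      rw [Nat.even_add_one, Nat.even_add_one]; tauto
    have h2 : n + 1 + 1 - 2 = n := by omega
    simp [h, h2]

lemma coeff_one_sub_X_inv (j : ℕ) :
    PowerSeries.coeff j (1 - PowerSeries.X : PowerSeries ℚ)⁻¹ = 1 := by
  rw [one_sub_X_inv_eq]; simp

lemma coeff_one_sub_X_sq_inv (j : ℕ) :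
    PowerSeries.coeff j (1 - PowerSeries.X ^ 2 : PowerSeries ℚ)⁻¹
      = if Even j then 1 else 0 := by
  rw [one_sub_X_sq_inv_eq]; simp

lemma A_coeffs (D : ℕ) :
    PowerSeries.coeff 0 ((1 - PowerSeries.X : PowerSeries ℚ)⁻¹ ^ D) = 1 ∧
    PowerSeries.coeff 1 ((1 - PowerSeries.X : PowerSeries ℚ)⁻¹ ^ D) = D ∧
    PowerSeries.coeff 2 ((1 - PowerSeries.X : PowerSeries ℚ)⁻¹ ^ D)
      = (D : ℚ) * (D + 1) / 2 ∧
    PowerSeries.coeff 3 ((1 - PowerSeries.X : PowerSeries ℚ)⁻¹ ^ D)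
      = (D : ℚ) * (D + 1) * (D + 2) / 6 ∧
    PowerSeries.coeff 4 ((1 - PowerSeries.X : PowerSeries ℚ)⁻¹ ^ D)
      = (D : ℚ) * (D + 1) * (D + 2) * (D + 3) / 24 ∧
    PowerSeries.coeff 5 ((1 - PowerSeries.X : PowerSeries ℚ)⁻¹ ^ D)
      = (D : ℚ) * (D + 1) * (D + 2) * (D + 3) * (D + 4) / 120 := by
  induction D with
  | zero => norm_num
  | succ D ih =>
    obtain ⟨i0, i1, i2, i3, i4, i5⟩ := ih
    refine ⟨?_, ?_, ?_, ?_, ?_, ?_⟩ <;>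
    · rw [pow_succ, PowerSeries.coeff_mul,
        Finset.Nat.sum_antidiagonal_eq_sum_range_succ_mk]
      simp only [coeff_one_sub_X_inv, mul_one,
        Finset.sum_range_succ, Finset.sum_range_zero, zero_add, i0, i1, i2, i3, i4, i5]
      try push_cast
      try ring

lemma B_coeffs (E : ℕ) :
    PowerSeries.coeff 0 ((1 - PowerSeries.X ^ 2 : PowerSeries ℚ)⁻¹ ^ E) = 1 ∧
    PowerSeries.coeff 1 ((1 - PowerSeries.X ^ 2 : PowerSeries ℚ)⁻¹ ^ E) = 0 ∧
    PowerSeries.coeff 2 ((1 - PowerSeries.X ^ 2 : PowerSeries ℚ)⁻¹ ^ E) = E ∧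
    PowerSeries.coeff 3 ((1 - PowerSeries.X ^ 2 : PowerSeries ℚ)⁻¹ ^ E) = 0 ∧
    PowerSeries.coeff 4 ((1 - PowerSeries.X ^ 2 : PowerSeries ℚ)⁻¹ ^ E)
      = (E : ℚ) * (E + 1) / 2 ∧
    PowerSeries.coeff 5 ((1 - PowerSeries.X ^ 2 : PowerSeries ℚ)⁻¹ ^ E) = 0 := by
  induction E with
  | zero => norm_num
  | succ E ih =>
    obtain ⟨i0, i1, i2, i3, i4, i5⟩ := ih
    refine ⟨?_, ?_, ?_, ?_, ?_, ?_⟩ <;>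
    · rw [pow_succ, PowerSeries.coeff_mul,
        Finset.Nat.sum_antidiagonal_eq_sum_range_succ_mk]
      simp only [coeff_one_sub_X_sq_inv,
        Finset.sum_range_succ, Finset.sum_range_zero, zero_add, i0, i1, i2, i3, i4, i5]
      norm_num [Nat.even_iff]
      try push_cast
      try ring

set_option maxHeartbeats 1000000 in
/-- The coefficient of `t⁵` in `P_B(t) · Q_B(t)` equals `(1/20) D (D²-1)(D²-4)`;
in particular `P_B(t) · Q_B(t) ≠ 1` for `D ≥ 3`. -/
theorem coeff_five_parafermionic_mul (D : ℕ) (hD : 1 ≤ D) :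
    PowerSeries.coeff 5 (parafermionicPoincareSeries D * parafermionicDualSeries D) =
      (1 / 20 : ℚ) * (D : ℚ) * ((D : ℚ) ^ 2 - 1) * ((D : ℚ) ^ 2 - 4) ∧
    (3 ≤ D → parafermionicPoincareSeries D * parafermionicDualSeries D ≠ 1) := by
  have hEcast : ((D * (D - 1) / 2 : ℕ) : ℚ) = (D : ℚ) * ((D : ℚ) - 1) / 2 := by
    have hdvd : 2 ∣ D * (D - 1) := by
      rcases Nat.even_or_odd D with h | h
      · exact Dvd.dvd.mul_right h.two_dvd _
      · exact Dvd.dvd.mul_left (Nat.Odd.sub_odd h odd_one).two_dvd _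
    rw [Nat.cast_div hdvd (by norm_num), Nat.cast_mul, Nat.cast_sub hD]
    norm_num
  obtain ⟨a0, a1, a2, a3, a4, a5⟩ := A_coeffs D
  obtain ⟨b0, b1, b2, b3, b4, b5⟩ := B_coeffs (D * (D - 1) / 2)
  set e : ℚ := ((D * (D - 1) / 2 : ℕ) : ℚ) with he
  have hPn : ∀ n : ℕ, PowerSeries.coeff n (parafermionicPoincareSeries D) =
      ∑ k ∈ Finset.range (n + 1),
        PowerSeries.coeff k ((1 - PowerSeries.X : PowerSeries ℚ)⁻¹ ^ D) *
        PowerSeries.coeff (n - k) ((1 - PowerSeries.X ^ 2 : PowerSeries ℚ)⁻¹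
          ^ (D * (D - 1) / 2)) := by
    intro n
    rw [parafermionicPoincareSeries, PowerSeries.coeff_mul,
      Finset.Nat.sum_antidiagonal_eq_sum_range_succ_mk]
  have p0 : PowerSeries.coeff 0 (parafermionicPoincareSeries D) = 1 := by
    rw [hPn 0]; simp [Finset.sum_range_succ, a0, b0]
  have p1 : PowerSeries.coeff 1 (parafermionicPoincareSeries D) = D := by
    rw [hPn 1]; simp [Finset.sum_range_succ, a0, a1, b0, b1]
  have p2 : PowerSeries.coeff 2 (parafermionicPoincareSeries D)
      = (D : ℚ) * (D + 1) / 2 + e := by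
    rw [hPn 2]; simp [Finset.sum_range_succ, a0, a1, a2, b0, b1, b2]; ring
  have p3 : PowerSeries.coeff 3 (parafermionicPoincareSeries D)
      = (D : ℚ) * (D + 1) * (D + 2) / 6 + (D : ℚ) * e := by
    rw [hPn 3]; simp [Finset.sum_range_succ, a0, a1, a2, a3, b0, b1, b2, b3]; ring
  have p4 : PowerSeries.coeff 4 (parafermionicPoincareSeries D)
      = (D : ℚ) * (D + 1) * (D + 2) * (D + 3) / 24 + (D : ℚ) * (D + 1) / 2 * e
        + e * (e + 1) / 2 := by
    rw [hPn 4]; simp [Finset.sum_range_succ, a0, a1, a2, a3, a4, b0, b1, b2, b3, b4]; ring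
  have p5 : PowerSeries.coeff 5 (parafermionicPoincareSeries D)
      = (D : ℚ) * (D + 1) * (D + 2) * (D + 3) * (D + 4) / 120
        + (D : ℚ) * (D + 1) * (D + 2) / 6 * e + (D : ℚ) * (e * (e + 1) / 2) := by
    rw [hPn 5]
    simp only [Finset.sum_range_succ, Finset.sum_range_zero, zero_add, Nat.reduceSub,
      a0, a1, a2, a3, a4, a5, b0, b1, b2, b3, b4, b5]
    ring
  have key : PowerSeries.coeff 5 (parafermionicPoincareSeries D * parafermionicDualSeries D) =
      (1 / 20 : ℚ) * (D : ℚ) * ((D : ℚ) ^ 2 - 1) * ((D : ℚ) ^ 2 - 4) := by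
    rw [PowerSeries.coeff_mul, Finset.Nat.sum_antidiagonal_eq_sum_range_succ_mk]
    simp only [Finset.sum_range_succ, Finset.sum_range_zero, zero_add, Nat.reduceSub,
      parafermionicDualSeries, map_sub, map_add, map_one, PowerSeries.coeff_C_mul,
      PowerSeries.coeff_X_pow, PowerSeries.coeff_X, PowerSeries.coeff_one,
      p0, p1, p2, p3, p4, p5]
    norm_num
    rw [hEcast]
    ring
  refine ⟨key, fun h3 hone => ?_⟩
  rw [hone] at key
  have h5 : PowerSeries.coeff 5 (1 : PowerSeries ℚ) = 0 := by simp
  rw [h5] at key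
  have hD3 : (3 : ℚ) ≤ (D : ℚ) := by exact_mod_cast h3
  have h1 : (0 : ℚ) < (D : ℚ) ^ 2 - 1 := by nlinarith
  have h2 : (0 : ℚ) < (D : ℚ) ^ 2 - 4 := by nlinarith
  have hDpos : (0 : ℚ) < (D : ℚ) := by linarith
  have hpos : (0 : ℚ) < (1 / 20 : ℚ) * (D : ℚ) * ((D : ℚ) ^ 2 - 1) * ((D : ℚ) ^ 2 - 4) := by
    have := mul_pos (mul_pos (mul_pos (by norm_num : (0:ℚ) < 1/20) hDpos) h1) h2
    exact this
  linarith [key]
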